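/- For one-dimensional CDFs define the Lévy distance d_L(F₁,F₂) = inf{ ε > 0 : F₁(x−ε) − ε ≤ F₂(x) ≤ F₁(x+ε) + ε for all x ∈ ℝ }, and for bivariate CDFs define d_L(H₁,H₂) = inf{ ε > 0 : H₁(x−ε, y−ε) − ε ≤ H₂(x,y) ≤ H₁(x+ε, y+ε) + ε for all (x,y) ∈ ℝ² }. Let G₁, G₂, F₁, F₂ be CDFs of probability measures on ℝ and define the lower-Fréchet bivariate CDFs H_k(x,y) = max(G_k(x) + F_k(y) − 1, 0) for k = 1, 2. Then d_L(H₁, H₂) ≤ 2 ( d_L(G₁,G₂) + d_L(F₁,F₂) ). In particular, if Ĝ_N → G and F̂_N → F in Lévy distance, then the corresponding countermonotonic (lower-Fréchet) joint CDFs converge to max(G + F − 1, 0) in the bivariate Lévy distance, i.e., weakly. -/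
import Mathlib

open MeasureTheory

noncomputable def cdfOf (μ : Measure ℝ) : ℝ → ℝ := fun x => (μ (Set.Iic x)).toReal

noncomputable def levy1 (F₁ F₂ : ℝ → ℝ) : ℝ :=
  sInf {ε : ℝ | 0 < ε ∧ ∀ x, F₁ (x - ε) - ε ≤ F₂ x ∧ F₂ x ≤ F₁ (x + ε) + ε}

noncomputable def levy2 (H₁ H₂ : ℝ → ℝ → ℝ) : ℝ :=
  sInf {ε : ℝ | 0 < ε ∧ ∀ x y,
    H₁ (x - ε) (y - ε) - ε ≤ H₂ x y ∧ H₂ x y ≤ H₁ (x + ε) (y + ε) + ε}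

lemma cdf_nonneg (μ : Measure ℝ) (x : ℝ) : 0 ≤ cdfOf μ x := ENNReal.toReal_nonneg

lemma cdf_le_one (μ : Measure ℝ) [IsProbabilityMeasure μ] (x : ℝ) : cdfOf μ x ≤ 1 := by
  have h : μ (Set.Iic x) ≤ 1 := prob_le_one
  simpa [cdfOf] using ENNReal.toReal_le_of_le_ofReal zero_le_one (by simpa using h)

lemma cdf_mono (μ : Measure ℝ) [IsProbabilityMeasure μ] : Monotone (cdfOf μ) := by
  intro a b hab
  have h : μ (Set.Iic a) ≤ μ (Set.Iic b) := measure_mono (Set.Iic_subset_Iic.2 hab)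
  exact ENNReal.toReal_mono (measure_ne_top _ _) h

lemma two_mem_levy1 (μ₁ μ₂ : Measure ℝ) [IsProbabilityMeasure μ₁] [IsProbabilityMeasure μ₂] :
    (2 : ℝ) ∈ {ε : ℝ | 0 < ε ∧ ∀ x, cdfOf μ₁ (x - ε) - ε ≤ cdfOf μ₂ x ∧
      cdfOf μ₂ x ≤ cdfOf μ₁ (x + ε) + ε} := by
  refine ⟨by norm_num, fun x => ⟨?_, ?_⟩⟩
  · have := cdf_le_one μ₁ (x - 2); have := cdf_nonneg μ₂ x; linarith
  · have := cdf_le_one μ₂ x; have := cdf_nonneg μ₁ (x + 2); linarith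

lemma levy1_nonneg (F₁ F₂ : ℝ → ℝ) : 0 ≤ levy1 F₁ F₂ :=
  Real.sInf_nonneg (fun _ h => le_of_lt h.1)

lemma levy2_nonneg (H₁ H₂ : ℝ → ℝ → ℝ) : 0 ≤ levy2 H₁ H₂ :=
  Real.sInf_nonneg (fun _ h => le_of_lt h.1)

lemma key_bound (μG₁ μG₂ μF₁ μF₂ : Measure ℝ)
    [IsProbabilityMeasure μG₁] [IsProbabilityMeasure μG₂]
    [IsProbabilityMeasure μF₁] [IsProbabilityMeasure μF₂] :
    levy2 (fun x y => max (cdfOf μG₁ x + cdfOf μF₁ y - 1) 0)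
        (fun x y => max (cdfOf μG₂ x + cdfOf μF₂ y - 1) 0)
      ≤ levy1 (cdfOf μG₁) (cdfOf μG₂) + levy1 (cdfOf μF₁) (cdfOf μF₂) := by
  set SG := {ε : ℝ | 0 < ε ∧ ∀ x, cdfOf μG₁ (x - ε) - ε ≤ cdfOf μG₂ x ∧
      cdfOf μG₂ x ≤ cdfOf μG₁ (x + ε) + ε} with hSG
  set SF := {ε : ℝ | 0 < ε ∧ ∀ x, cdfOf μF₁ (x - ε) - ε ≤ cdfOf μF₂ x ∧
      cdfOf μF₂ x ≤ cdfOf μF₁ (x + ε) + ε} with hSF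
  set SH := {ε : ℝ | 0 < ε ∧ ∀ x y,
      max (cdfOf μG₁ (x - ε) + cdfOf μF₁ (y - ε) - 1) 0 - ε ≤
        max (cdfOf μG₂ x + cdfOf μF₂ y - 1) 0 ∧
      max (cdfOf μG₂ x + cdfOf μF₂ y - 1) 0 ≤
        max (cdfOf μG₁ (x + ε) + cdfOf μF₁ (y + ε) - 1) 0 + ε} with hSH
  have hadd : ∀ ε ∈ SG, ∀ δ ∈ SF, ε + δ ∈ SH := by
    rintro ε ⟨hε, hG⟩ δ ⟨hδ, hF⟩
    refine ⟨by linarith, fun x y => ⟨?_, ?_⟩⟩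
    · have h1 : cdfOf μG₁ (x - (ε + δ)) ≤ cdfOf μG₁ (x - ε) := cdf_mono μG₁ (by linarith)
      have h2 : cdfOf μF₁ (y - (ε + δ)) ≤ cdfOf μF₁ (y - δ) := cdf_mono μF₁ (by linarith)
      have h3 := (hG x).1
      have h4 := (hF y).1
      have h5 : cdfOf μG₁ (x - (ε + δ)) + cdfOf μF₁ (y - (ε + δ)) - 1 - (ε + δ) ≤
          cdfOf μG₂ x + cdfOf μF₂ y - 1 := by linarith
      rcases le_or_gt (cdfOf μG₁ (x - (ε + δ)) + cdfOf μF₁ (y - (ε + δ)) - 1) 0 with h | h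
      · rw [max_eq_right h]
        have := le_max_right (cdfOf μG₂ x + cdfOf μF₂ y - 1) (0:ℝ)
        linarith
      · rw [max_eq_left h.le]
        exact h5.trans (le_max_left _ _)
    · have h1 : cdfOf μG₁ (x + ε) ≤ cdfOf μG₁ (x + (ε + δ)) := cdf_mono μG₁ (by linarith)
      have h2 : cdfOf μF₁ (y + δ) ≤ cdfOf μF₁ (y + (ε + δ)) := cdf_mono μF₁ (by linarith)
      have h3 := (hG x).2
      have h4 := (hF y).2
      have h5 : cdfOf μG₂ x + cdfOf μF₂ y - 1 ≤
          cdfOf μG₁ (x + (ε + δ)) + cdfOf μF₁ (y + (ε + δ)) - 1 + (ε + δ) := by linarith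
      have h6 := le_max_left (cdfOf μG₁ (x + (ε + δ)) + cdfOf μF₁ (y + (ε + δ)) - 1) (0:ℝ)
      have h7 := le_max_right (cdfOf μG₁ (x + (ε + δ)) + cdfOf μF₁ (y + (ε + δ)) - 1) (0:ℝ)
      exact max_le (h5.trans (by linarith)) (by linarith)
  have hSGne : SG.Nonempty := ⟨2, two_mem_levy1 μG₁ μG₂⟩
  have hSFne : SF.Nonempty := ⟨2, two_mem_levy1 μF₁ μF₂⟩
  have hbdd : BddBelow SH := ⟨0, fun ε hε => hε.1.le⟩
  have main : ∀ η > 0, levy2 (fun x y => max (cdfOf μG₁ x + cdfOf μF₁ y - 1) 0)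
        (fun x y => max (cdfOf μG₂ x + cdfOf μF₂ y - 1) 0)
      ≤ levy1 (cdfOf μG₁) (cdfOf μG₂) + levy1 (cdfOf μF₁) (cdfOf μF₂) + η := by
    intro η hη
    obtain ⟨ε, hεS, hεlt⟩ := Real.lt_sInf_add_pos hSGne (half_pos hη)
    obtain ⟨δ, hδS, hδlt⟩ := Real.lt_sInf_add_pos hSFne (half_pos hη)
    have : levy2 (fun x y => max (cdfOf μG₁ x + cdfOf μF₁ y - 1) 0)
        (fun x y => max (cdfOf μG₂ x + cdfOf μF₂ y - 1) 0) ≤ ε + δ :=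
      csInf_le hbdd (hadd ε hεS δ hδS)
    have hl1 : levy1 (cdfOf μG₁) (cdfOf μG₂) = sInf SG := rfl
    have hl2 : levy1 (cdfOf μF₁) (cdfOf μF₂) = sInf SF := rfl
    rw [hl1, hl2]
    linarith
  exact le_of_forall_pos_le_add main

/-- **Lévy-distance stability of the lower Fréchet–Hoeffding joint CDF.** For CDFs
`G₁, G₂, F₁, F₂` of probability measures on `ℝ`, the countermonotonic joint CDFs
`H_k(x,y) = max (G_k x + F_k y - 1) 0` satisfy
`d_L(H₁,H₂) ≤ 2 (d_L(G₁,G₂) + d_L(F₁,F₂))`. In particular, if `Ĝ_N → G` and `F̂_N → F` in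
Lévy distance then `max (Ĝ_N + F̂_N - 1) 0 → max (G + F - 1) 0` in the bivariate Lévy
distance. -/
theorem stmt_15 :
    (∀ (μG₁ μG₂ μF₁ μF₂ : Measure ℝ),
      IsProbabilityMeasure μG₁ → IsProbabilityMeasure μG₂ →
      IsProbabilityMeasure μF₁ → IsProbabilityMeasure μF₂ →
      levy2 (fun x y => max (cdfOf μG₁ x + cdfOf μF₁ y - 1) 0)
          (fun x y => max (cdfOf μG₂ x + cdfOf μF₂ y - 1) 0)
        ≤ 2 * (levy1 (cdfOf μG₁) (cdfOf μG₂) + levy1 (cdfOf μF₁) (cdfOf μF₂)))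
    ∧ (∀ (μG μF : Measure ℝ) (μGs μFs : ℕ → Measure ℝ),
      IsProbabilityMeasure μG → IsProbabilityMeasure μF →
      (∀ n, IsProbabilityMeasure (μGs n)) → (∀ n, IsProbabilityMeasure (μFs n)) →
      Filter.Tendsto (fun n => levy1 (cdfOf (μGs n)) (cdfOf μG)) Filter.atTop (nhds 0) →
      Filter.Tendsto (fun n => levy1 (cdfOf (μFs n)) (cdfOf μF)) Filter.atTop (nhds 0) →
      Filter.Tendsto
        (fun n => levy2 (fun x y => max (cdfOf (μGs n) x + cdfOf (μFs n) y - 1) 0)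
          (fun x y => max (cdfOf μG x + cdfOf μF y - 1) 0))
        Filter.atTop (nhds 0)) := by
  constructor
  · intro μG₁ μG₂ μF₁ μF₂ h1 h2 h3 h4
    have := key_bound μG₁ μG₂ μF₁ μF₂
    have hn1 := levy1_nonneg (cdfOf μG₁) (cdfOf μG₂)
    have hn2 := levy1_nonneg (cdfOf μF₁) (cdfOf μF₂)
    linarith
  · intro μG μF μGs μFs hG hF hGs hFs hGt hFt
    have hb : ∀ n, levy2 (fun x y => max (cdfOf (μGs n) x + cdfOf (μFs n) y - 1) 0)
        (fun x y => max (cdfOf μG x + cdfOf μF y - 1) 0)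
        ≤ 2 * (levy1 (cdfOf (μGs n)) (cdfOf μG) + levy1 (cdfOf (μFs n)) (cdfOf μF)) := by
      intro n
      have := hGs n; have := hFs n
      have := key_bound (μGs n) μG (μFs n) μF
      have hn1 := levy1_nonneg (cdfOf (μGs n)) (cdfOf μG)
      have hn2 := levy1_nonneg (cdfOf (μFs n)) (cdfOf μF)
      linarith
    have htend : Filter.Tendsto
        (fun n => 2 * (levy1 (cdfOf (μGs n)) (cdfOf μG) + levy1 (cdfOf (μFs n)) (cdfOf μF)))
        Filter.atTop (nhds 0) := by
      have := (hGt.add hFt).const_mul (2:ℝ)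
      simpa using this
    exact squeeze_zero (fun n => levy2_nonneg _ _) hb htend
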